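/- arXiv:1503.00510 — 3 statements merged into one kernel-verified Lean document; each statement's English description precedes it below -/
import Mathlib

section
/- Let V : M → [0,∞) be measurable on a measure space with measure μ, let x₀ be fixed and suppose f(t) = V(x₀,t)^{-1/p} where V(x₀,t) is positive and non-decreasing in t, and suppose ∫₁^∞ V(x₀,t)^{-1/p} dt < ∞. Then there exists a constant C_p > 0 such that V(x₀,t) ≥ C_p t^p for all t ≥ 2. -/
open MeasureTheory Set

theorem stmt_1 (p : ℝ) (hp : 1 < p) (V : ℝ → ℝ)
    (hpos : ∀ t > (0:ℝ), 0 < V t)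
    (hmono : ∀ s t : ℝ, 0 < s → s ≤ t → V s ≤ V t)
    (hint : IntegrableOn (fun t => (V t) ^ (-(1/p))) (Ioi 1)) :
    ∃ C > (0:ℝ), ∀ t ≥ (2:ℝ), C * t ^ p ≤ V t := by
  have hp0 : (0:ℝ) < p := lt_trans one_pos hp
  set I : ℝ := ∫ t in Ioi (1:ℝ), (V t) ^ (-(1/p)) with hI
  have hnonneg : 0 ≤ᵐ[volume.restrict (Ioi (1:ℝ))] fun t => (V t) ^ (-(1/p)) := by
    filter_upwards [ae_restrict_mem measurableSet_Ioi] with t ht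
    exact Real.rpow_nonneg (hpos t (lt_trans one_pos ht)).le _
  have key : ∀ t : ℝ, 2 ≤ t → (t / 2) * (V t) ^ (-(1/p)) ≤ I := by
    intro t ht
    have ht0 : (0:ℝ) < t := lt_of_lt_of_le two_pos ht
    have h1 : (1:ℝ) ≤ t / 2 := by linarith
    have hsub : Ioc (t/2) t ⊆ Ioi (1:ℝ) := fun s hs =>
      lt_of_le_of_lt h1 hs.1
    have hintsub : IntegrableOn (fun s => (V s) ^ (-(1/p))) (Ioc (t/2) t) :=
      hint.mono_set hsub
    have hconst :
        ∫ _s in Ioc (t/2) t, (V t) ^ (-(1/p)) = (t - t/2) * (V t) ^ (-(1/p)) := by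
      rw [setIntegral_const, Real.volume_real_Ioc_of_le (by linarith),
        smul_eq_mul]
    have hmono1 :
        ∫ _s in Ioc (t/2) t, (V t) ^ (-(1/p)) ≤
          ∫ s in Ioc (t/2) t, (V s) ^ (-(1/p)) := by
      refine setIntegral_mono_on (integrableOn_const (by simp))
        hintsub measurableSet_Ioc ?_
      intro s hs
      have hs0 : (0:ℝ) < s := lt_of_lt_of_le one_pos (le_of_lt (hsub hs))
      exact Real.rpow_le_rpow_of_nonpos (hpos s hs0) (hmono s t hs0 hs.2)
        (neg_nonpos.2 (by positivity))
    have hmono2 :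
        ∫ s in Ioc (t/2) t, (V s) ^ (-(1/p)) ≤ I :=
      setIntegral_mono_set hint hnonneg (HasSubset.Subset.eventuallyLE hsub)
    have : t - t/2 = t/2 := by ring
    calc (t / 2) * (V t) ^ (-(1/p)) = (t - t/2) * (V t) ^ (-(1/p)) := by rw [this]
      _ = ∫ _s in Ioc (t/2) t, (V t) ^ (-(1/p)) := hconst.symm
      _ ≤ ∫ s in Ioc (t/2) t, (V s) ^ (-(1/p)) := hmono1
      _ ≤ I := hmono2
  have hV2 : 0 < V 2 := hpos 2 two_pos
  have hIpos : 0 < I := by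
    have := key 2 le_rfl
    have h2 : (0:ℝ) < (2:ℝ)/2 * (V 2) ^ (-(1/p)) := by positivity
    linarith
  refine ⟨(2 * I) ^ (-p), by positivity, fun t ht => ?_⟩
  have ht0 : (0:ℝ) < t := lt_of_lt_of_le two_pos ht
  have hVt : 0 < V t := hpos t ht0
  have ha : (V t) ^ (-(1/p)) ≤ 2 * I / t := by
    have := key t ht
    rw [div_mul_eq_mul_div, div_le_iff₀ two_pos] at this
    rw [le_div_iff₀ ht0]
    linarith [this]
  have hapos : (0:ℝ) < (V t) ^ (-(1/p)) := Real.rpow_pos_of_pos hVt _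
  have hstep : (2 * I / t) ^ (-p) ≤ ((V t) ^ (-(1/p))) ^ (-p) :=
    Real.rpow_le_rpow_of_nonpos hapos ha (by linarith)
  have hL : ((V t) ^ (-(1/p))) ^ (-p) = V t := by
    rw [← Real.rpow_mul hVt.le, neg_mul_neg, one_div,
      inv_mul_cancel₀ (ne_of_gt hp0), Real.rpow_one]
  have hR : (2 * I / t) ^ (-p) = (2 * I) ^ (-p) * t ^ p := by
    rw [Real.div_rpow (by positivity) ht0.le, Real.rpow_neg ht0.le,
      div_eq_mul_inv, inv_inv]
  rw [hL, hR] at hstep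
  exact hstep
end

section
/- Let p, p₀ with 1 < p < p₀ and let V : [1,∞) → (0,∞) be non-decreasing. Suppose that for every r ∈ (1,p₀), ∫₁^∞ (t/V(t))^{1/(r-1)} dt < ∞. Then ∫₁^∞ dt/V(t)^{1/p} < ∞. -/
open MeasureTheory Set

theorem stmt_2 (p p₀ : ℝ) (hp : 1 < p) (hpp₀ : p < p₀) (V : ℝ → ℝ)
    (hpos : ∀ t ≥ (1:ℝ), 0 < V t)
    (hmono : ∀ s t : ℝ, 1 ≤ s → s ≤ t → V s ≤ V t)
    (hint : ∀ r : ℝ, 1 < r → r < p₀ →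
      IntegrableOn (fun t => (t / V t) ^ (1/(r-1))) (Ioi 1)) :
    IntegrableOn (fun t => (V t) ^ (-(1/p))) (Ioi 1) := by
  set r : ℝ := p + min (p₀ - p) 1 / 2 with hr_def
  have hmin : 0 < min (p₀ - p) 1 := lt_min (by linarith) one_pos
  have hpr : p < r := by simp only [hr_def]; linarith
  have hr1 : 1 < r := lt_trans hp hpr
  have hrp₀ : r < p₀ := by
    have : min (p₀ - p) 1 ≤ p₀ - p := min_le_left _ _
    simp only [hr_def]; linarith
  have hrp1 : r < p + 1 := by
    have : min (p₀ - p) 1 ≤ 1 := min_le_right _ _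
    simp only [hr_def]; linarith
  have hden : 0 < p - r + 1 := by linarith
  set α : ℝ := p / (p - r + 1) with hα_def
  have hp0 : (0:ℝ) < p := by linarith
  have hαpos : 0 < α := div_pos hp0 hden
  have hpα : p < α := by
    rw [hα_def, lt_div_iff₀ hden]
    nlinarith
  have hαp1 : 1 < α / p := (one_lt_div hp0).mpr hpα
  have hr1' : 0 < r - 1 := by linarith
  -- the dominating function
  have hg1 : IntegrableOn (fun t => (t / V t) ^ (1/(r-1))) (Ioi 1) := hint r hr1 hrp₀
  have hg2 : IntegrableOn (fun t : ℝ => t ^ (-(α/p))) (Ioi 1) :=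
    integrableOn_Ioi_rpow_of_lt (by linarith) one_pos
  have hg : IntegrableOn (fun t => (t / V t) ^ (1/(r-1)) + t ^ (-(α/p))) (Ioi 1) :=
    hg1.add hg2
  -- measurability of f
  have hWmono : Monotone (fun t : ℝ => V (max t 1)) := by
    intro s t hst
    exact hmono _ _ (le_max_right _ _) (max_le_max hst le_rfl)
  have hWmeas : Measurable (fun t : ℝ => V (max t 1)) := hWmono.measurable
  have hfm : AEStronglyMeasurable (fun t => (V t) ^ (-(1/p)))
      ((volume : Measure ℝ).restrict (Ioi 1)) := by
    have hrp : Measurable (fun x : ℝ => x ^ (-(1/p))) := by fun_prop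
    have h1 : Measurable (fun t : ℝ => (V (max t 1)) ^ (-(1/p))) :=
      hrp.comp hWmeas
    refine h1.aestronglyMeasurable.congr ?_
    filter_upwards [self_mem_ae_restrict measurableSet_Ioi] with t ht
    have : max t 1 = t := max_eq_left (le_of_lt ht)
    rw [this]
  refine Integrable.mono' hg hfm ?_
  filter_upwards [self_mem_ae_restrict measurableSet_Ioi] with t ht
  have ht1 : (1:ℝ) < t := ht
  have htpos : (0:ℝ) < t := by linarith
  have hVt : 0 < V t := hpos t ht1.le
  have hfnn : 0 ≤ (V t) ^ (-(1/p)) := Real.rpow_nonneg hVt.le _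
  rw [Real.norm_of_nonneg hfnn]
  rcases le_or_gt (V t) (t ^ α) with h | h
  · -- V t ≤ t^α : bound by first term
    have key : (V t) ^ (-(1/p)) ≤ (t / V t) ^ (1/(r-1)) := by
      rw [Real.div_rpow htpos.le hVt.le]
      rw [le_div_iff₀ (Real.rpow_pos_of_pos hVt _)]
      have he : 0 < 1/(r-1) - 1/p := by
        have := one_div_lt_one_div_of_lt hr1' (show r - 1 < p by linarith)
        linarith
      calc (V t) ^ (-(1/p)) * (V t) ^ (1/(r-1))
          = (V t) ^ (1/(r-1) - 1/p) := by
            rw [← Real.rpow_add hVt]; ring_nf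
        _ ≤ (t ^ α) ^ (1/(r-1) - 1/p) :=
            Real.rpow_le_rpow hVt.le h he.le
        _ = t ^ (α * (1/(r-1) - 1/p)) := (Real.rpow_mul htpos.le _ _).symm
        _ = t ^ (1/(r-1)) := by
            congr 1
            rw [hα_def]
            field_simp
            ring
    have : 0 ≤ t ^ (-(α/p)) := Real.rpow_nonneg htpos.le _
    linarith
  · -- t^α < V t : bound by second term
    have key : (V t) ^ (-(1/p)) ≤ t ^ (-(α/p)) := by
      have h1 : (V t) ^ (-(1/p)) ≤ (t ^ α) ^ (-(1/p)) :=
        Real.rpow_le_rpow_of_nonpos (Real.rpow_pos_of_pos htpos _) h.le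
          (by positivity |> neg_nonpos_of_nonneg)
      calc (V t) ^ (-(1/p)) ≤ (t ^ α) ^ (-(1/p)) := h1
        _ = t ^ (α * (-(1/p))) := (Real.rpow_mul htpos.le _ _).symm
        _ = t ^ (-(α/p)) := by ring_nf
    have : 0 ≤ (t / V t) ^ (1/(r-1)) := Real.rpow_nonneg (by positivity) _
    linarith
end

section
/- With the setting of the previous statement but assuming V ≤ 0 (so Tu ≤ 0 whenever u ≥ 0) and ε := sup_x (1/h(x)) ∫ G(x,y)|V(y)|h(y) dy < 1, the Neumann series g = Σ_{k≥0} (-1)^k T^k h converges pointwise and satisfies h ≤ g ≤ (1/(1-ε)) h. -/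
open MeasureTheory Set

theorem stmt_4 {X : Type*} [MeasurableSpace X] (μ : Measure X) [SigmaFinite μ]
    (G : X → X → ℝ) (V h : X → ℝ) (ε : ℝ)
    (hG : ∀ x y, 0 < G x y) (hh : ∀ x, 0 < h x)
    (hV : ∀ y, V y ≤ 0)
    (hε0 : 0 ≤ ε) (hε : ε < 1)
    (hk : ℕ → X → ℝ) (hk0 : hk 0 = h)
    (hrec : ∀ k x, hk (k+1) x = ∫ y, G x y * V y * hk k y ∂μ)
    (hdom : ∀ x, Integrable (fun y => G x y * |V y| * h y) μ)
    (hmeas : ∀ k x, AEStronglyMeasurable (fun y => G x y * V y * hk k y) μ)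
    (hbound : ∀ x, ∫ y, G x y * |V y| * h y ∂μ ≤ ε * h x) :
    (∀ x, Summable (fun k => |hk k x|)) ∧
    (∀ x, h x ≤ ∑' k, (-1:ℝ) ^ k * hk k x) ∧
    (∀ x, ∑' k, (-1:ℝ) ^ k * hk k x ≤ (1/(1 - ε)) * h x) := by
  -- main inductive bounds
  have key : ∀ k, (∀ x, |hk k x| ≤ ε ^ k * h x) ∧ (∀ x, 0 ≤ (-1:ℝ) ^ k * hk k x) := by
    intro k
    induction k with
    | zero =>
      constructor
      · intro x; simp [hk0, abs_of_pos (hh x)]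
      · intro x; simp [hk0, (hh x).le]
    | succ k ih =>
      obtain ⟨ihb, ihs⟩ := ih
      constructor
      · intro x
        rw [hrec]
        calc |∫ y, G x y * V y * hk k y ∂μ| ≤ ∫ y, |G x y| * |V y| * |hk k y| ∂μ := by
              simpa [Real.norm_eq_abs, abs_mul] using
                norm_integral_le_integral_norm (μ := μ) (fun y => G x y * V y * hk k y)
          _ ≤ ∫ y, ε ^ k * (G x y * |V y| * h y) ∂μ := by
              apply integral_mono_of_nonneg
              · exact Filter.Eventually.of_forall fun y => by positivity
              · exact (hdom x).const_mul _
              · refine Filter.Eventually.of_forall fun y => ?_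
                show |G x y| * |V y| * |hk k y| ≤ ε ^ k * (G x y * |V y| * h y)
                rw [abs_of_pos (hG x y)]
                have hGp := (hG x y).le
                have hVp := abs_nonneg (V y)
                linarith [mul_le_mul_of_nonneg_left (ihb y) (mul_nonneg hGp hVp)]
          _ = ε ^ k * ∫ y, G x y * |V y| * h y ∂μ := integral_const_mul _ _
          _ ≤ ε ^ k * (ε * h x) := by
              exact mul_le_mul_of_nonneg_left (hbound x) (pow_nonneg hε0 k)
          _ = ε ^ (k + 1) * h x := by ring
      · intro x
        rw [hrec]
        have : (-1:ℝ) ^ (k+1) * ∫ y, G x y * V y * hk k y ∂μ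
            = ∫ y, (-1:ℝ) ^ (k+1) * (G x y * V y * hk k y) ∂μ :=
          (integral_const_mul _ _).symm
        rw [this]
        apply integral_nonneg
        intro y
        show (0:ℝ) ≤ (-1:ℝ) ^ (k+1) * (G x y * V y * hk k y)
        have h1 : (-1:ℝ) ^ (k+1) * (G x y * V y * hk k y)
            = G x y * (-V y) * ((-1:ℝ) ^ k * hk k y) := by ring
        rw [h1]
        exact mul_nonneg (mul_nonneg (hG x y).le (neg_nonneg.mpr (hV y))) (ihs y)
  have hsum : ∀ x, Summable (fun k => |hk k x|) := by
    intro x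
    apply Summable.of_nonneg_of_le (fun k => abs_nonneg _) (fun k => (key k).1 x)
    exact (summable_geometric_of_lt_one hε0 hε).mul_right (h x)
  have hsum2 : ∀ x, Summable (fun k => (-1:ℝ) ^ k * hk k x) := by
    intro x
    apply Summable.of_abs
    simpa [abs_mul] using hsum x
  refine ⟨hsum, fun x => ?_, fun x => ?_⟩
  · have := Summable.le_tsum (hsum2 x) 0 (fun k _ => (key k).2 x)
    simpa [hk0] using this
  · calc ∑' k, (-1:ℝ) ^ k * hk k x ≤ ∑' k, ε ^ k * h x := by
          apply Summable.tsum_le_tsum _ (hsum2 x)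
            ((summable_geometric_of_lt_one hε0 hε).mul_right (h x))
          intro k
          calc (-1:ℝ) ^ k * hk k x ≤ |(-1:ℝ) ^ k * hk k x| := le_abs_self _
            _ = |hk k x| := by simp [abs_mul]
            _ ≤ ε ^ k * h x := (key k).1 x
      _ = (1/(1-ε)) * h x := by
          rw [tsum_mul_right, tsum_geometric_of_lt_one hε0 hε]
          ring
end
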